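/- Let D be an invertible multiplicative Hom-Lie algebra structure on a finite-dimensional complex Lie algebra g. Then dim Der_k(g) = dim Der_0(g) for all k ∈ ℕ, and hence the Hilbert series Σ_{k≥0} dim Der_k(g)·t^k equals dim Der_0(g)/(1-t) as a formal power series; in particular the total dimension Σ_k dim Der_k(g) is either zero or infinite. -/

import Mathlib

/-- The space `Der_k(g)` of `D^k`-derivations, as a submodule of `End(g)`. -/
def DerK {g : Type*} [LieRing g] [LieAlgebra ℂ g] (D : g →ₗ[ℂ] g) (k : ℕ) :
    Submodule ℂ (g →ₗ[ℂ] g) where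
  carrier := {δ | D ∘ₗ δ = δ ∘ₗ D ∧
    ∀ x y : g, δ ⁅x, y⁆ = ⁅δ x, (D ^ k) y⁆ + ⁅(D ^ k) x, δ y⁆}
  add_mem' := by
    rintro δ τ ⟨h1, h2⟩ ⟨h3, h4⟩
    refine ⟨?_, fun x y => ?_⟩
    · ext v; simp only [LinearMap.comp_apply, LinearMap.add_apply, map_add]
      rw [← LinearMap.comp_apply D δ, h1, ← LinearMap.comp_apply D τ, h3]; rfl
    · simp [LinearMap.add_apply, h2, h4, lie_add, add_lie]; abel
  zero_mem' := by exact ⟨by ext v; simp, fun x y => by simp⟩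
  smul_mem' := by
    rintro c δ ⟨h1, h2⟩
    refine ⟨?_, fun x y => ?_⟩
    · ext v; simpa using congrArg (c • ·) (LinearMap.congr_fun h1 v)
    · simp [LinearMap.smul_apply, h2, lie_smul, smul_lie, smul_add]

open PowerSeries in
/-- for an invertible multiplicative Hom-Lie structure `D` on a
finite-dimensional complex Lie algebra `g`, all `Der_k(g)` have the same
dimension, the Hilbert series `Σ dim Der_k(g) tᵏ` equals
`dim Der₀(g)/(1-t)` as a formal power series, and the total dimension
`Σ_k dim Der_k(g)` is either zero or infinite. -/
theorem stmt17 {g : Type*} [LieRing g] [LieAlgebra ℂ g] [FiniteDimensional ℂ g]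
    (D : g →ₗ[ℂ] g)
    (hmul : ∀ x y, D ⁅x, y⁆ = ⁅D x, D y⁆)
    (hhj : ∀ x y z : g, ⁅D x, ⁅y, z⁆⁆ + ⁅D y, ⁅z, x⁆⁆ + ⁅D z, ⁅x, y⁆⁆ = 0)
    (hbij : Function.Bijective D) :
    (∀ k : ℕ, Module.finrank ℂ (DerK D k) = Module.finrank ℂ (DerK D 0)) ∧
    ((PowerSeries.mk fun k => (Module.finrank ℂ (DerK D k) : ℚ)) *
        (1 - PowerSeries.X) =
      PowerSeries.C (Module.finrank ℂ (DerK D 0) : ℚ)) ∧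
    (Module.finrank ℂ (DerK D 0) = 0 ∨
      ∀ N : ℕ, ∃ m : ℕ,
        N ≤ ∑ k ∈ Finset.range m, Module.finrank ℂ (DerK D k)) := by
  classical
  set e : g ≃ₗ[ℂ] g := LinearEquiv.ofBijective D hbij with he
  have hek : ∀ (k : ℕ) (x : g), (e ^ k) x = (D ^ k) x := by
    intro k
    induction k with
    | zero => intro x; simp
    | succ n ih =>
      intro x
      have h1 : (e ^ (n+1)) x = (e ^ n) (e x) := by
        rw [pow_succ]; rfl
      have h2 : (D ^ (n+1)) x = (D ^ n) (D x) := by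
        rw [pow_succ]; rfl
      rw [h1, h2, ih]
      rfl
  have hmulk : ∀ (k : ℕ) (x y : g), (D ^ k) ⁅x, y⁆ = ⁅(D ^ k) x, (D ^ k) y⁆ := by
    intro k
    induction k with
    | zero => intro x y; simp
    | succ n ih =>
      intro x y
      have h2 : ∀ z : g, (D ^ (n+1)) z = (D ^ n) (D z) := by
        intro z; rw [pow_succ]; rfl
      rw [h2, h2, h2, hmul, ih]
  have hcomm : ∀ (k : ℕ) (x : g), D ((D ^ k) x) = (D ^ k) (D x) := by
    intro k x
    have : (D * D ^ k) x = (D ^ k * D) x := by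
      rw [← pow_succ', ← pow_succ]
    exact this
  have key : ∀ k : ℕ, Module.finrank ℂ (DerK D k) = Module.finrank ℂ (DerK D 0) := by
    intro k
    set F : (g →ₗ[ℂ] g) ≃ₗ[ℂ] (g →ₗ[ℂ] g) :=
      LinearEquiv.arrowCongr (LinearEquiv.refl ℂ g) (e ^ k) with hF
    have hFapp : ∀ (δ : g →ₗ[ℂ] g) (x : g), F δ x = (e ^ k) (δ x) := by
      intro δ x; simp [hF]
    have hsymm : ∀ (k : ℕ) (u : g), D ((e ^ k).symm u) = (e ^ k).symm (D u) := by
      intro k u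
      have : (e ^ k).symm (D u) = (e ^ k).symm (D ((e ^ k) ((e ^ k).symm u))) := by
        rw [LinearEquiv.apply_symm_apply]
      rw [this, hek, hcomm, ← hek, LinearEquiv.symm_apply_apply]
    have hinvmul : ∀ (u v : g),
        (e ^ k).symm ⁅u, v⁆ = ⁅(e ^ k).symm u, (e ^ k).symm v⁆ := by
      intro u v
      have : ⁅u, v⁆ = (e ^ k) ⁅(e ^ k).symm u, (e ^ k).symm v⁆ := by
        rw [hek, hmulk, ← hek k ((e ^ k).symm u), ← hek k ((e ^ k).symm v),
          LinearEquiv.apply_symm_apply, LinearEquiv.apply_symm_apply]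
      rw [this, LinearEquiv.symm_apply_apply]
    have hmap : (DerK D 0).map (F : (g →ₗ[ℂ] g) →ₗ[ℂ] (g →ₗ[ℂ] g)) = DerK D k := by
      apply le_antisymm
      · rintro τ ⟨δ, ⟨h1, h2⟩, rfl⟩
        refine ⟨?_, fun x y => ?_⟩
        · ext v
          simp only [LinearMap.comp_apply]
          have hFc : (F : _ →ₗ[ℂ] _) δ = F δ := rfl
          rw [hFc, hFapp, hFapp, hek, hcomm, ← LinearMap.comp_apply D δ, h1,
            LinearMap.comp_apply, ← hek]
        · have hFc : (F : _ →ₗ[ℂ] _) δ = F δ := rfl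
          rw [hFc, hFapp, hFapp, hFapp]
          have := h2 x y
          simp only [pow_zero, Module.End.one_apply] at this
          rw [this, map_add, hek, hek, hek, hmulk, hmulk, hek]
      · rintro τ ⟨h1, h2⟩
        refine ⟨((e ^ k).symm : g →ₗ[ℂ] g) ∘ₗ τ, ⟨?_, fun x y => ?_⟩, ?_⟩
        · ext v
          simp only [LinearMap.comp_apply, LinearEquiv.coe_coe]
          rw [hsymm, ← LinearMap.comp_apply D τ, h1]
          rfl
        · simp only [LinearMap.comp_apply, LinearEquiv.coe_coe, pow_zero,
            Module.End.one_apply]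
          rw [h2, map_add, hinvmul, hinvmul, ← hek, LinearEquiv.symm_apply_apply,
            ← hek, LinearEquiv.symm_apply_apply]
        · ext v
          have : F (((e ^ k).symm : g →ₗ[ℂ] g) ∘ₗ τ) v = τ v := by
            rw [hFapp]
            simp
          exact this
    rw [← hmap]
    exact LinearEquiv.finrank_map_eq F (DerK D 0)
  refine ⟨key, ?_, ?_⟩
  · ext n
    cases n with
    | zero =>
      simp [mul_sub, PowerSeries.coeff_zero_eq_constantCoeff]
    | succ m =>
      rw [mul_sub, mul_one, map_sub]
      rw [PowerSeries.coeff_succ_mul_X, PowerSeries.coeff_mk, PowerSeries.coeff_mk,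
        key (m+1), key m, sub_self, PowerSeries.coeff_C]
      simp
  · by_cases h : Module.finrank ℂ (DerK D 0) = 0
    · exact Or.inl h
    · refine Or.inr fun N => ⟨N, ?_⟩
      calc N = N * 1 := (mul_one N).symm
        _ ≤ N * Module.finrank ℂ (DerK D 0) :=
            Nat.mul_le_mul_left N (Nat.one_le_iff_ne_zero.mpr h)
        _ = ∑ k ∈ Finset.range N, Module.finrank ℂ (DerK D 0) := by
            rw [Finset.sum_const, Finset.card_range, smul_eq_mul]
        _ = ∑ k ∈ Finset.range N, Module.finrank ℂ (DerK D k) := by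
            exact Finset.sum_congr rfl fun k _ => (key k).symm
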